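/- (Tuning of a GNN.) Let A be a GNN with sum aggregation, combination functions σ(xC^(t)+yA^(t)+b^(t)) with all-integer weights, and linear classification with integer coefficients, and let φ be any K^# formula. Then there exists a GNN A' (of the same kind) such that A' accepts a pointed graph (G,u) if and only if A accepts (G,u) and (G,u) satisfies φ. -/

import Mathlib

open scoped Classical

/-- A finite labeled directed graph: edges and a valuation of atomic
propositions (indexed by `ℕ`) at each vertex. -/
structure LGraph (V : Type) [Fintype V] where
  edge : V → V → Bool
  label : V → ℕ → Bool

mutual
/-- Formulas of the logic `K^#`. -/
inductive KForm : Type where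
  | atom : ℕ → KForm
  | not : KForm → KForm
  | or : KForm → KForm → KForm
  | ge0 : KExpr → KForm
/-- Expressions of the logic `K^#`. -/
inductive KExpr : Type where
  | const : ℤ → KExpr
  | ind : KForm → KExpr
  | count : KForm → KExpr
  | add : KExpr → KExpr → KExpr
  | scale : ℤ → KExpr → KExpr
end

mutual
/-- Truth of a `K^#` formula at a pointed graph. -/
def KForm.sat {V : Type} [Fintype V] (G : LGraph V) (u : V) : KForm → Bool
  | .atom p => G.label u p
  | .not φ => !(KForm.sat G u φ)
  | .or φ ψ => KForm.sat G u φ || KForm.sat G u ψ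
  | .ge0 E => decide (0 ≤ KExpr.val G u E)
/-- Value of a `K^#` expression at a pointed graph. -/
def KExpr.val {V : Type} [Fintype V] (G : LGraph V) (u : V) : KExpr → ℤ
  | .const c => c
  | .ind φ => if KForm.sat G u φ then 1 else 0
  | .count φ =>
      ((Finset.univ.filter (fun v => G.edge u v = true ∧ KForm.sat G v φ = true)).card : ℤ)
  | .add E₁ E₂ => KExpr.val G u E₁ + KExpr.val G u E₂
  | .scale c E => c * KExpr.val G u E
end

/-- The clipped (truncated) ReLU `σ(x) = min(max(0,x),1)`. -/
def clip (x : ℝ) : ℝ := min (max 0 x) 1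

/-- A sum-aggregation GNN: dimension `d`, number `k ≤ d` of input propositions,
`L` layers, each layer `t` given by integer matrices `C t`, `A t` and an integer
bias vector `b t` (the combination function being `σ(xC + yA + b)` where `y` is
the sum of the states of the successors), and a classification function `cls`. -/
structure GNN where
  d : ℕ
  k : ℕ
  hk : k ≤ d
  L : ℕ
  C : ℕ → Matrix (Fin d) (Fin d) ℤ
  A : ℕ → Matrix (Fin d) (Fin d) ℤ
  b : ℕ → Fin d → ℤ
  cls : (Fin d → ℝ) → Bool

/-- The state of the GNN after `t` layers: the initial state lists the truth values
of the atomic propositions `p_0, …, p_{k-1}` padded with zeros, and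
`x_{t+1}(u) = σ(x_t(u)·C + (Σ_{(u,v)∈E} x_t(v))·A + b)`. -/
noncomputable def GNN.state (N : GNN) {V : Type} [Fintype V] (G : LGraph V) :
    ℕ → V → Fin N.d → ℝ
  | 0 => fun u i => if i.val < N.k ∧ G.label u i.val = true then 1 else 0
  | t + 1 => fun u i =>
      clip ((∑ j, N.state G t u j * (N.C t j i : ℝ))
        + (∑ j, (∑ v ∈ Finset.univ.filter (fun v => G.edge u v = true), N.state G t v j)
            * (N.A t j i : ℝ))
        + (N.b t i : ℝ))

/-- The GNN accepts a pointed graph iff the classification function returns 1 (true)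
on the final state. -/
def GNN.accepts (N : GNN) {V : Type} [Fintype V] (G : LGraph V) (u : V) : Prop :=
  N.cls (N.state G N.L u) = true

/-! ### Auxiliary lemmas on `clip` and GNN states -/

lemma clip_nonneg (x : ℝ) : 0 ≤ clip x := le_min (le_max_left 0 x) zero_le_one

lemma clip_le_one (x : ℝ) : clip x ≤ 1 := min_le_right _ _

lemma clip_of_mem {x : ℝ} (h0 : 0 ≤ x) (h1 : x ≤ 1) : clip x = x := by
  simp [clip, max_eq_right h0, min_eq_left h1]

lemma clip_eq_one {x : ℝ} (h : 1 ≤ x) : clip x = 1 := by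
  have : max 0 x = x := max_eq_right (le_trans zero_le_one h)
  simp [clip, this, min_eq_right h]

lemma clip_eq_zero {x : ℝ} (h : x ≤ 0) : clip x = 0 := by
  have : max 0 x = 0 := max_eq_left h
  simp [clip, this]

lemma GNN.state_nonneg (N : GNN) {V : Type} [Fintype V] (G : LGraph V) (t : ℕ) (u : V)
    (i : Fin N.d) : 0 ≤ N.state G t u i := by
  cases t with
  | zero => simp only [GNN.state]; split <;> norm_num
  | succ t => simp only [GNN.state]; exact clip_nonneg _

lemma GNN.state_le_one (N : GNN) {V : Type} [Fintype V] (G : LGraph V) (t : ℕ) (u : V)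
    (i : Fin N.d) : N.state G t u i ≤ 1 := by
  cases t with
  | zero => simp only [GNN.state]; split <;> norm_num
  | succ t => simp only [GNN.state]; exact clip_le_one _

/-! ### Size, depth, subformulas, atom bounds, linear coefficients -/

mutual
def sizeF : KForm → ℕ
  | .atom _ => 1
  | .not ψ => sizeF ψ + 1
  | .or ψ χ => sizeF ψ + sizeF χ + 1
  | .ge0 E => sizeE E + 1
def sizeE : KExpr → ℕ
  | .const _ => 0
  | .ind ψ => sizeF ψ + 1
  | .count ψ => sizeF ψ + 1
  | .add E₁ E₂ => sizeE E₁ + sizeE E₂ + 1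
  | .scale _ E => sizeE E + 1
end

mutual
def depF : KForm → ℕ
  | .atom _ => 1
  | .not ψ => depF ψ + 1
  | .or ψ χ => max (depF ψ) (depF χ) + 1
  | .ge0 E => depE E + 1
def depE : KExpr → ℕ
  | .const _ => 0
  | .ind ψ => depF ψ
  | .count ψ => depF ψ
  | .add E₁ E₂ => max (depE E₁) (depE E₂)
  | .scale _ E => depE E
end

mutual
def subF : KForm → List KForm
  | .atom p => [.atom p]
  | .not ψ => .not ψ :: subF ψ
  | .or ψ χ => .or ψ χ :: (subF ψ ++ subF χ)
  | .ge0 E => .ge0 E :: subE E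
def subE : KExpr → List KForm
  | .const _ => []
  | .ind ψ => subF ψ
  | .count ψ => subF ψ
  | .add E₁ E₂ => subE E₁ ++ subE E₂
  | .scale _ E => subE E
end

mutual
def atomsF : KForm → ℕ
  | .atom p => p + 1
  | .not ψ => atomsF ψ
  | .or ψ χ => max (atomsF ψ) (atomsF χ)
  | .ge0 E => atomsE E
def atomsE : KExpr → ℕ
  | .const _ => 0
  | .ind ψ => atomsF ψ
  | .count ψ => atomsF ψ
  | .add E₁ E₂ => max (atomsE E₁) (atomsE E₂)
  | .scale _ E => atomsE E
end

noncomputable def indCoef : KExpr → KForm → ℤ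
  | .const _, _ => 0
  | .ind χ, ψ => if ψ = χ then 1 else 0
  | .count _, _ => 0
  | .add E₁ E₂, ψ => indCoef E₁ ψ + indCoef E₂ ψ
  | .scale c E, ψ => c * indCoef E ψ

noncomputable def cntCoef : KExpr → KForm → ℤ
  | .const _, _ => 0
  | .ind _, _ => 0
  | .count χ, ψ => if ψ = χ then 1 else 0
  | .add E₁ E₂, ψ => cntCoef E₁ ψ + cntCoef E₂ ψ
  | .scale c E, ψ => c * cntCoef E ψ

def constTerm : KExpr → ℤ
  | .const c => c
  | .ind _ => 0
  | .count _ => 0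
  | .add E₁ E₂ => constTerm E₁ + constTerm E₂
  | .scale c E => c * constTerm E

mutual
lemma self_mem_subF : ∀ ψ : KForm, ψ ∈ subF ψ
  | .atom p => by simp [subF]
  | .not ψ => by simp [subF]
  | .or ψ χ => by simp [subF]
  | .ge0 E => by simp [subF]
end

mutual
lemma subF_closed : ∀ ρ : KForm, ∀ ψ ∈ subF ρ, ∀ χ ∈ subF ψ, χ ∈ subF ρ
  | .atom p => by
      intro ψ hψ χ hχ
      simp [subF] at hψ; subst hψ; simpa [subF] using hχ
  | .not ρ₁ => by
      intro ψ hψ χ hχ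
      simp only [subF, List.mem_cons] at hψ ⊢
      rcases hψ with rfl | hψ
      · simpa [subF] using hχ
      · exact Or.inr (subF_closed ρ₁ ψ hψ χ hχ)
  | .or ρ₁ ρ₂ => by
      intro ψ hψ χ hχ
      simp only [subF, List.mem_cons, List.mem_append] at hψ ⊢
      rcases hψ with rfl | hψ | hψ
      · simpa [subF] using hχ
      · exact Or.inr (Or.inl (subF_closed ρ₁ ψ hψ χ hχ))
      · exact Or.inr (Or.inr (subF_closed ρ₂ ψ hψ χ hχ))
  | .ge0 E => by
      intro ψ hψ χ hχ
      simp only [subF, List.mem_cons] at hψ ⊢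
      rcases hψ with rfl | hψ
      · simpa [subF] using hχ
      · exact Or.inr (subE_closed E ψ hψ χ hχ)
lemma subE_closed : ∀ E : KExpr, ∀ ψ ∈ subE E, ∀ χ ∈ subF ψ, χ ∈ subE E
  | .const _ => by intro ψ hψ; simp [subE] at hψ
  | .ind ρ => fun ψ hψ => subF_closed ρ ψ hψ
  | .count ρ => fun ψ hψ => subF_closed ρ ψ hψ
  | .add E₁ E₂ => by
      intro ψ hψ χ hχ
      simp only [subE, List.mem_append] at hψ ⊢
      rcases hψ with hψ | hψ
      · exact Or.inl (subE_closed E₁ ψ hψ χ hχ)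
      · exact Or.inr (subE_closed E₂ ψ hψ χ hχ)
  | .scale c E => fun ψ hψ => subE_closed E ψ hψ
end
mutual
lemma depF_mono : ∀ ρ : KForm, ∀ ψ ∈ subF ρ, depF ψ ≤ depF ρ
  | .atom p => by intro ψ hψ; simp [subF] at hψ; subst hψ; exact le_refl _
  | .not ρ₁ => by
      intro ψ hψ
      simp only [subF, List.mem_cons] at hψ
      rcases hψ with rfl | hψ
      · exact le_refl _
      · exact le_trans (depF_mono ρ₁ ψ hψ) (by simp [depF])
  | .or ρ₁ ρ₂ => by
      intro ψ hψ
      simp only [subF, List.mem_cons, List.mem_append] at hψ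
      rcases hψ with rfl | hψ | hψ
      · exact le_refl _
      · exact le_trans (depF_mono ρ₁ ψ hψ) (by simp [depF]; omega)
      · exact le_trans (depF_mono ρ₂ ψ hψ) (by simp [depF]; omega)
  | .ge0 E => by
      intro ψ hψ
      simp only [subF, List.mem_cons] at hψ
      rcases hψ with rfl | hψ
      · exact le_refl _
      · exact le_trans (depE_mono E ψ hψ) (by simp [depF])
lemma depE_mono : ∀ E : KExpr, ∀ ψ ∈ subE E, depF ψ ≤ depE E
  | .const _ => by intro ψ hψ; simp [subE] at hψ
  | .ind ρ => by
      intro ψ hψ; exact le_trans (depF_mono ρ ψ hψ) (le_of_eq rfl)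
  | .count ρ => by
      intro ψ hψ; exact le_trans (depF_mono ρ ψ hψ) (le_of_eq rfl)
  | .add E₁ E₂ => by
      intro ψ hψ
      simp only [subE, List.mem_append] at hψ
      rcases hψ with hψ | hψ
      · exact le_trans (depE_mono E₁ ψ hψ) (le_max_left _ _)
      · exact le_trans (depE_mono E₂ ψ hψ) (le_max_right _ _)
  | .scale c E => fun ψ hψ => depE_mono E ψ hψ
end

mutual
lemma sizeF_mono : ∀ ρ : KForm, ∀ ψ ∈ subF ρ, sizeF ψ ≤ sizeF ρ
  | .atom p => by intro ψ hψ; simp [subF] at hψ; subst hψ; exact le_refl _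
  | .not ρ₁ => by
      intro ψ hψ
      simp only [subF, List.mem_cons] at hψ
      rcases hψ with rfl | hψ
      · exact le_refl _
      · exact le_trans (sizeF_mono ρ₁ ψ hψ) (by simp [sizeF])
  | .or ρ₁ ρ₂ => by
      intro ψ hψ
      simp only [subF, List.mem_cons, List.mem_append] at hψ
      rcases hψ with rfl | hψ | hψ
      · exact le_refl _
      · exact le_trans (sizeF_mono ρ₁ ψ hψ) (by simp [sizeF]; omega)
      · exact le_trans (sizeF_mono ρ₂ ψ hψ) (by simp [sizeF]; omega)
  | .ge0 E => by
      intro ψ hψ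
      simp only [subF, List.mem_cons] at hψ
      rcases hψ with rfl | hψ
      · exact le_refl _
      · exact le_trans (sizeE_mono E ψ hψ) (by simp [sizeF])
lemma sizeE_mono : ∀ E : KExpr, ∀ ψ ∈ subE E, sizeF ψ ≤ sizeE E
  | .const _ => by intro ψ hψ; simp [subE] at hψ
  | .ind ρ => by
      intro ψ hψ; exact le_trans (sizeF_mono ρ ψ hψ) (by simp [sizeE])
  | .count ρ => by
      intro ψ hψ; exact le_trans (sizeF_mono ρ ψ hψ) (by simp [sizeE])
  | .add E₁ E₂ => by
      intro ψ hψ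
      simp only [subE, List.mem_append] at hψ
      rcases hψ with hψ | hψ
      · exact le_trans (sizeE_mono E₁ ψ hψ) (by simp [sizeE]; omega)
      · exact le_trans (sizeE_mono E₂ ψ hψ) (by simp [sizeE]; omega)
  | .scale c E => by
      intro ψ hψ; exact le_trans (sizeE_mono E ψ hψ) (by simp [sizeE])
end

mutual
lemma atomsF_bound : ∀ ρ : KForm, ∀ p : ℕ, (KForm.atom p) ∈ subF ρ → p < atomsF ρ
  | .atom q => by intro p hp; simp only [subF, List.mem_singleton, KForm.atom.injEq] at hp; subst hp; simp [atomsF]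
  | .not ρ₁ => by
      intro p hp
      simp only [subF, List.mem_cons] at hp
      rcases hp with hp | hp
      · exact absurd hp (by simp)
      · exact atomsF_bound ρ₁ p hp
  | .or ρ₁ ρ₂ => by
      intro p hp
      simp only [subF, List.mem_cons, List.mem_append] at hp
      rcases hp with hp | hp | hp
      · exact absurd hp (by simp)
      · exact lt_of_lt_of_le (atomsF_bound ρ₁ p hp) (le_max_left _ _)
      · exact lt_of_lt_of_le (atomsF_bound ρ₂ p hp) (le_max_right _ _)
  | .ge0 E => by
      intro p hp
      simp only [subF, List.mem_cons] at hp
      rcases hp with hp | hp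
      · exact absurd hp (by simp)
      · exact atomsE_bound E p hp
lemma atomsE_bound : ∀ E : KExpr, ∀ p : ℕ, (KForm.atom p) ∈ subE E → p < atomsE E
  | .const _ => by intro p hp; simp [subE] at hp
  | .ind ρ => fun p hp => atomsF_bound ρ p hp
  | .count ρ => fun p hp => atomsF_bound ρ p hp
  | .add E₁ E₂ => by
      intro p hp
      simp only [subE, List.mem_append] at hp
      rcases hp with hp | hp
      · exact lt_of_lt_of_le (atomsE_bound E₁ p hp) (le_max_left _ _)
      · exact lt_of_lt_of_le (atomsE_bound E₂ p hp) (le_max_right _ _)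
  | .scale c E => fun p hp => atomsE_bound E p hp
end

lemma one_le_depF (ψ : KForm) : 1 ≤ depF ψ := by
  cases ψ <;> simp [depF]

lemma indCoef_support : ∀ E : KExpr, ∀ ψ : KForm, indCoef E ψ ≠ 0 → ψ ∈ subE E
  | .const _ => by intro ψ h; simp [indCoef] at h
  | .ind χ => by
      intro ψ h
      by_cases hc : ψ = χ
      · subst hc; exact self_mem_subF ψ
      · simp [indCoef, hc] at h
  | .count _ => by intro ψ h; simp [indCoef] at h
  | .add E₁ E₂ => by
      intro ψ h
      simp only [subE, List.mem_append]
      by_cases h1 : indCoef E₁ ψ = 0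
      · exact Or.inr (indCoef_support E₂ ψ (by simp [indCoef, h1] at h; exact h))
      · exact Or.inl (indCoef_support E₁ ψ h1)
  | .scale c E => by
      intro ψ h
      have : indCoef E ψ ≠ 0 := by
        intro h0; simp [indCoef, h0] at h
      exact indCoef_support E ψ this

lemma cntCoef_support : ∀ E : KExpr, ∀ ψ : KForm, cntCoef E ψ ≠ 0 → ψ ∈ subE E
  | .const _ => by intro ψ h; simp [cntCoef] at h
  | .ind _ => by intro ψ h; simp [cntCoef] at h
  | .count χ => by
      intro ψ h
      by_cases hc : ψ = χ
      · subst hc; exact self_mem_subF ψ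
      · simp [cntCoef, hc] at h
  | .add E₁ E₂ => by
      intro ψ h
      simp only [subE, List.mem_append]
      by_cases h1 : cntCoef E₁ ψ = 0
      · exact Or.inr (cntCoef_support E₂ ψ (by simp [cntCoef, h1] at h; exact h))
      · exact Or.inl (cntCoef_support E₁ ψ h1)
  | .scale c E => by
      intro ψ h
      have : cntCoef E ψ ≠ 0 := by
        intro h0; simp [cntCoef, h0] at h
      exact cntCoef_support E ψ this
/-! ### The list of subformulas and the linear form of an expression -/

noncomputable def SS (φ : KForm) : List KForm := (subF φ).dedup

noncomputable def nn (φ : KForm) : ℕ := (SS φ).length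

lemma SS_nodup (φ : KForm) : (SS φ).Nodup := List.nodup_dedup _

lemma mem_SS (φ : KForm) {ψ : KForm} : ψ ∈ SS φ ↔ ψ ∈ subF φ := List.mem_dedup

lemma SS_get_mem (φ : KForm) (m : Fin (nn φ)) : (SS φ).get m ∈ subF φ :=
  (mem_SS φ).mp (List.get_mem (SS φ) m)

lemma SS_get_inj (φ : KForm) {m m' : Fin (nn φ)}
    (h : (SS φ).get m = (SS φ).get m') : m = m' := by
  have := ((SS_nodup φ).get_inj_iff (i := m) (j := m')).mp h
  exact this

lemma sum_delta {R : Type} [Ring R] (φ ψ : KForm) (hψ : ψ ∈ SS φ)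
    (x : Fin (nn φ) → R) (c v : R) (hx : ∀ m : Fin (nn φ), (SS φ).get m = ψ → x m = v) :
    (∑ m : Fin (nn φ), (if (SS φ).get m = ψ then c else 0) * x m) = c * v := by
  obtain ⟨m₀', hm₀⟩ := List.mem_iff_get.mp hψ
  set m₀ : Fin (nn φ) := ⟨m₀'.1, m₀'.2⟩ with hm₀def
  have hget : (SS φ).get m₀ = ψ := hm₀
  have h := Finset.sum_eq_single
    (f := fun m : Fin (nn φ) => (if (SS φ).get m = ψ then c else 0) * x m)
    (s := Finset.univ) m₀
    (by
      intro m _ hm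
      show (if (SS φ).get m = ψ then c else 0) * x m = 0
      rw [if_neg, zero_mul]
      intro h
      exact hm (SS_get_inj φ (h.trans hget.symm)))
    (by intro h; exact absurd (Finset.mem_univ m₀) h)
  rw [h]
  show (if (SS φ).get m₀ = ψ then c else 0) * x m₀ = c * v
  rw [if_pos hget, hx m₀ hget]

/-- The value of an expression as a linear combination of indicator values and
count values of the subformulas in `SS φ`. -/
lemma val_linear (φ : KForm) {V : Type} [Fintype V] (G : LGraph V) (u : V) :
    ∀ E : KExpr, (∀ ψ ∈ subE E, ψ ∈ SS φ) →
    KExpr.val G u E = constTerm E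
      + (∑ m : Fin (nn φ), indCoef E ((SS φ).get m)
          * (if KForm.sat G u ((SS φ).get m) then 1 else 0))
      + (∑ m : Fin (nn φ), cntCoef E ((SS φ).get m)
          * ((Finset.univ.filter
              (fun v => G.edge u v = true ∧ KForm.sat G v ((SS φ).get m) = true)).card : ℤ))
  | .const c => by intro _; simp [KExpr.val, constTerm, indCoef, cntCoef]
  | .ind χ => by
      intro hs
      have hχ : χ ∈ SS φ := hs χ (self_mem_subF χ)
      have h1 : (∑ m : Fin (nn φ), indCoef (KExpr.ind χ) ((SS φ).get m)
          * (if KForm.sat G u ((SS φ).get m) then 1 else 0))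
          = (1 : ℤ) * (if KForm.sat G u χ then 1 else 0) := by
        refine sum_delta φ χ hχ _ 1 _ ?_
        intro m hm; rw [hm]
      simp only [indCoef] at h1
      simp only [KExpr.val, constTerm, cntCoef, indCoef, zero_mul, Finset.sum_const_zero,
        add_zero, zero_add]
      rw [h1, one_mul]
  | .count χ => by
      intro hs
      have hχ : χ ∈ SS φ := hs χ (self_mem_subF χ)
      have h1 : (∑ m : Fin (nn φ), cntCoef (KExpr.count χ) ((SS φ).get m)
          * ((Finset.univ.filter
              (fun v => G.edge u v = true ∧ KForm.sat G v ((SS φ).get m) = true)).card : ℤ))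
          = (1 : ℤ) * ((Finset.univ.filter
              (fun v => G.edge u v = true ∧ KForm.sat G v χ = true)).card : ℤ) := by
        refine sum_delta φ χ hχ _ 1 _ ?_
        intro m hm; rw [hm]
      simp only [cntCoef] at h1
      simp only [KExpr.val, constTerm, indCoef, cntCoef, zero_mul, Finset.sum_const_zero,
        add_zero, zero_add]
      rw [h1, one_mul]
  | .add E₁ E₂ => by
      intro hs
      have hs₁ : ∀ ψ ∈ subE E₁, ψ ∈ SS φ := fun ψ h => hs ψ (by simp [subE, h])
      have hs₂ : ∀ ψ ∈ subE E₂, ψ ∈ SS φ := fun ψ h => hs ψ (by simp [subE, h])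
      simp only [KExpr.val, constTerm, indCoef, cntCoef,
        val_linear φ G u E₁ hs₁, val_linear φ G u E₂ hs₂,
        add_mul, Finset.sum_add_distrib]
      ring
  | .scale c E => by
      intro hs
      have hs' : ∀ ψ ∈ subE E, ψ ∈ SS φ := fun ψ h => hs ψ (by simpa [subE] using h)
      simp only [KExpr.val, constTerm, indCoef, cntCoef,
        val_linear φ G u E hs', mul_assoc, ← Finset.mul_sum]
      ring
/-! ### Construction of the tuned GNN -/

section Construction

variable (N : GNN) (φ : KForm)

/-- Number of input coordinates of the tuned GNN. -/
noncomputable def kk : ℕ := max N.k (atomsF φ)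

/-- Dimension of the tuned GNN. -/
noncomputable def dd : ℕ := kk N φ + N.d + nn φ + 1

/-- Structured index type for the coordinates of the tuned GNN. -/
abbrev II : Type := ((Fin (kk N φ) ⊕ Fin N.d) ⊕ Fin (nn φ)) ⊕ Fin 1

/-- The equivalence between the structured index type and `Fin (dd N φ)`. -/
noncomputable def ee : II N φ ≃ Fin (dd N φ) :=
  ((((finSumFinEquiv.sumCongr (Equiv.refl (Fin (nn φ)))).trans
      finSumFinEquiv).sumCongr (Equiv.refl (Fin 1))).trans finSumFinEquiv)

lemma ee_inp (i : Fin (kk N φ)) :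
    ((ee N φ) (.inl (.inl (.inl i))) : ℕ) = (i : ℕ) := by
  rfl

lemma ee_b1 (j : Fin N.d) :
    ((ee N φ) (.inl (.inl (.inr j))) : ℕ) = kk N φ + (j : ℕ) := by
  rfl

lemma ee_fm (m : Fin (nn φ)) :
    ((ee N φ) (.inl (.inr m)) : ℕ) = kk N φ + N.d + (m : ℕ) := by
  rfl

lemma ee_cst (z : Fin 1) :
    ((ee N φ) (.inr z) : ℕ) = kk N φ + N.d + nn φ := by
  rw [Fin.fin_one_eq_zero z]
  rfl

/-- `C`-matrix coefficients targeting the coordinate of formula `ψ`. -/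
noncomputable def fC (ψ : KForm) : II N φ → ℤ := fun κ =>
  match ψ, κ with
  | .atom p, .inl (.inl (.inl i)) => if (i : ℕ) = p then 1 else 0
  | .not ψ₁, .inl (.inr m') => if (SS φ).get m' = ψ₁ then -1 else 0
  | .or ψ₁ ψ₂, .inl (.inr m') =>
      (if (SS φ).get m' = ψ₁ then 1 else 0) + (if (SS φ).get m' = ψ₂ then 1 else 0)
  | .ge0 E, .inl (.inr m') => indCoef E ((SS φ).get m')
  | _, _ => 0

/-- `A`-matrix coefficients targeting the coordinate of formula `ψ`. -/
noncomputable def fA (ψ : KForm) : II N φ → ℤ := fun κ =>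
  match ψ, κ with
  | .ge0 E, .inl (.inr m') => cntCoef E ((SS φ).get m')
  | _, _ => 0

/-- Bias targeting the coordinate of formula `ψ`. -/
noncomputable def fb : KForm → ℤ
  | .atom _ => 0
  | .not _ => 1
  | .or _ _ => 0
  | .ge0 E => constTerm E + 1

/-- The `C`-matrix of the tuned GNN, in structured coordinates
(first argument: source, second: target). -/
noncomputable def Crule (t : ℕ) : II N φ → II N φ → ℤ := fun κ ι =>
  match ι with
  | .inl (.inl (.inl i)) => if κ = .inl (.inl (.inl i)) then 1 else 0
  | .inl (.inl (.inr j)) =>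
      if t = 0 then
        (match κ with
        | .inl (.inl (.inl i)) =>
            if (j : ℕ) < N.k ∧ (i : ℕ) = (j : ℕ) then 1 else 0
        | _ => 0)
      else if t - 1 < N.L then
        (match κ with
        | .inl (.inl (.inr j')) => N.C (t-1) j' j
        | _ => 0)
      else if κ = .inl (.inl (.inr j)) then 1 else 0
  | .inl (.inr m) => fC N φ ((SS φ).get m) κ
  | .inr _ => 0

/-- The `A`-matrix of the tuned GNN, in structured coordinates. -/
noncomputable def Arule (t : ℕ) : II N φ → II N φ → ℤ := fun κ ι =>
  match ι with
  | .inl (.inl (.inl _)) => 0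
  | .inl (.inl (.inr j)) =>
      if t ≠ 0 ∧ t - 1 < N.L then
        (match κ with
        | .inl (.inl (.inr j')) => N.A (t-1) j' j
        | _ => 0)
      else 0
  | .inl (.inr m) => fA N φ ((SS φ).get m) κ
  | .inr _ => 0

/-- The bias of the tuned GNN, in structured coordinates. -/
noncomputable def brule (t : ℕ) : II N φ → ℤ := fun ι =>
  match ι with
  | .inl (.inl (.inl _)) => 0
  | .inl (.inl (.inr j)) => if t ≠ 0 ∧ t - 1 < N.L then N.b (t-1) j else 0
  | .inl (.inr m) => fb ((SS φ).get m)
  | .inr _ => 1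

variable (a : Fin N.d → ℤ)

/-- A bound larger than any possible value of the output linear form. -/
noncomputable def Mbig : ℤ := 1 + ∑ i, |a i|

/-- The output linear form of the tuned GNN, in structured coordinates. -/
noncomputable def aa : II N φ → ℤ := fun ι =>
  match ι with
  | .inl (.inl (.inl _)) => 0
  | .inl (.inl (.inr j)) => a j
  | .inl (.inr m) => if (SS φ).get m = φ then Mbig N a else 0
  | .inr _ => -(Mbig N a)

/-- The tuned GNN. -/
noncomputable def mkN : GNN where
  d := dd N φ
  k := kk N φ
  hk := by unfold dd; omega
  L := max N.L (depF φ) + 1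
  C := fun t => Matrix.of fun i j => Crule N φ t ((ee N φ).symm i) ((ee N φ).symm j)
  A := fun t => Matrix.of fun i j => Arule N φ t ((ee N φ).symm i) ((ee N φ).symm j)
  b := fun t i => brule N φ t ((ee N φ).symm i)
  cls := fun x => decide (0 ≤ ∑ i, ((aa N φ a ((ee N φ).symm i) : ℤ) : ℝ) * x i)

variable {V : Type} [Fintype V] (G : LGraph V)

/-- The state of the tuned GNN in structured coordinates: recursion unfolding. -/
lemma st_succ (t : ℕ) (u : V) (ι : II N φ) :
    (mkN N φ a).state G (t+1) u ((ee N φ) ι)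
      = clip ((∑ κ, (mkN N φ a).state G t u ((ee N φ) κ) * (Crule N φ t κ ι : ℝ))
        + (∑ κ, (∑ v ∈ Finset.univ.filter (fun v => G.edge u v = true),
              (mkN N φ a).state G t v ((ee N φ) κ)) * (Arule N φ t κ ι : ℝ))
        + (brule N φ t ι : ℝ)) := by
  show clip _ = clip _
  congr 1
  refine congrArg₂ (· + ·) (congrArg₂ (· + ·) ?_ ?_) ?_
  · exact Fintype.sum_equiv (ee N φ) _ _ (fun κ => by
      simp [mkN, Equiv.symm_apply_apply]) |>.symm
  · exact Fintype.sum_equiv (ee N φ) _ _ (fun κ => by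
      simp [mkN, Equiv.symm_apply_apply]) |>.symm
  · simp [mkN, Equiv.symm_apply_apply]

lemma st_zero (u : V) (ι : II N φ) :
    (mkN N φ a).state G 0 u ((ee N φ) ι)
      = match ι with
        | .inl (.inl (.inl i)) => if G.label u (i : ℕ) then 1 else 0
        | _ => 0 := by
  show (if ((ee N φ) ι : ℕ) < (mkN N φ a).k ∧ G.label u ((ee N φ) ι : ℕ) = true then (1:ℝ) else 0) = _
  match ι with
  | .inl (.inl (.inl i)) =>
      simp only [ee_inp, mkN]
      have : (i : ℕ) < kk N φ := i.2
      simp [this]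
  | .inl (.inl (.inr j)) =>
      simp only [ee_b1, mkN]
      have : ¬ (kk N φ + (j : ℕ) < kk N φ) := by omega
      simp [this]
  | .inl (.inr m) =>
      simp only [ee_fm, mkN]
      have : ¬ (kk N φ + N.d + (m : ℕ) < kk N φ) := by omega
      simp [this]
  | .inr z =>
      simp only [ee_cst, mkN]
      have : ¬ (kk N φ + N.d + nn φ < kk N φ) := by omega
      simp [this]

end Construction
lemma cast_ite (P : Prop) [Decidable P] (x y : ℤ) :
    ((if P then x else y : ℤ) : ℝ) = if P then (x : ℝ) else (y : ℝ) := by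
  split <;> rfl

lemma clip_zero : clip 0 = 0 := clip_eq_zero le_rfl
lemma clip_one : clip 1 = 1 := clip_eq_one le_rfl

lemma clip_ite (P : Prop) [Decidable P] :
    clip (if P then 1 else 0) = (if P then 1 else 0 : ℝ) := by
  split <;> simp [clip_zero, clip_one]

section StateLemmas

variable (N : GNN) (φ : KForm) (a : Fin N.d → ℤ) {V : Type} [Fintype V] (G : LGraph V)

/-- The input coordinates always hold the labels. -/
lemma st_inp (t : ℕ) (u : V) (i : Fin (kk N φ)) :
    (mkN N φ a).state G t u ((ee N φ) (.inl (.inl (.inl i))))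
      = if G.label u (i : ℕ) then 1 else 0 := by
  induction t generalizing u with
  | zero => rw [st_zero]
  | succ t ih =>
      rw [st_succ]
      have hC : ∀ κ : II N φ, Crule N φ t κ (.inl (.inl (.inl i)))
          = if κ = .inl (.inl (.inl i)) then 1 else 0 := fun κ => rfl
      have hA : ∀ κ : II N φ, Arule N φ t κ (.inl (.inl (.inl i))) = 0 := fun κ => by
        cases κ with
        | inl κ' => cases κ' with
          | inl κ'' => cases κ'' <;> rfl
          | inr _ => rfl
        | inr _ => rfl
      have hb : brule N φ t (.inl (.inl (.inl i))) = 0 := rfl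
      simp only [hC, hA, hb, cast_ite, Int.cast_one, Int.cast_zero, mul_ite, mul_one,
        mul_zero, Finset.sum_ite_eq', Finset.mem_univ, if_true, Finset.sum_const_zero,
        add_zero]
      rw [ih u]
      exact clip_ite _

/-- The constant coordinate holds `1` from layer `1` on. -/
lemma st_cst (t : ℕ) (u : V) (z : Fin 1) :
    (mkN N φ a).state G (t + 1) u ((ee N φ) (.inr z)) = 1 := by
  rw [st_succ]
  have hC : ∀ κ : II N φ, Crule N φ t κ (.inr z) = 0 := fun κ => rfl
  have hA : ∀ κ : II N φ, Arule N φ t κ (.inr z) = 0 := fun κ => rfl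
  have hb : brule N φ t (.inr z) = 1 := rfl
  simp only [hC, hA, hb, Int.cast_zero, Int.cast_one, mul_zero, Finset.sum_const_zero,
    add_zero, zero_add]
  exact clip_one

/-- The simulation coordinates follow the states of the original GNN (frozen at
layer `N.L`). -/
lemma st_b1 (t : ℕ) (u : V) (j : Fin N.d) :
    (mkN N φ a).state G (t + 1) u ((ee N φ) (.inl (.inl (.inr j))))
      = N.state G (min t N.L) u j := by
  induction t generalizing u j with
  | zero =>
      rw [st_succ]
      have hA : ∀ κ : II N φ, Arule N φ 0 κ (.inl (.inl (.inr j))) = 0 := fun κ => by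
        cases κ with
        | inl κ' => cases κ' with
          | inl κ'' => cases κ'' <;> simp [Arule]
          | inr _ => simp [Arule]
        | inr _ => simp [Arule]
      have hb : brule N φ 0 (.inl (.inl (.inr j))) = 0 := by simp [brule]
      have hCsum : (∑ κ : II N φ, (mkN N φ a).state G 0 u ((ee N φ) κ)
            * (Crule N φ 0 κ (.inl (.inl (.inr j))) : ℝ))
          = (if (j : ℕ) < N.k ∧ G.label u (j : ℕ) then 1 else 0) := by
        have hCval : ∀ i : Fin (kk N φ), Crule N φ 0 (.inl (.inl (.inl i))) (.inl (.inl (.inr j)))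
            = if (j : ℕ) < N.k ∧ (i : ℕ) = (j : ℕ) then 1 else 0 := fun i => by
          simp [Crule]
        have hC0 : ∀ j' : Fin N.d, Crule N φ 0 (.inl (.inl (.inr j'))) (.inl (.inl (.inr j))) = 0 :=
          fun j' => by simp [Crule]
        have hC1 : ∀ m : Fin (nn φ), Crule N φ 0 (.inl (.inr m)) (.inl (.inl (.inr j))) = 0 :=
          fun m => by simp [Crule]
        have hC2 : ∀ z : Fin 1, Crule N φ 0 (.inr z) (.inl (.inl (.inr j))) = 0 :=
          fun z => by simp [Crule]
        rw [Fintype.sum_sum_type, Fintype.sum_sum_type, Fintype.sum_sum_type]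
        simp only [hCval, hC0, hC1, hC2, Int.cast_zero, mul_zero, Finset.sum_const_zero,
          add_zero]
        by_cases hjk : (j : ℕ) < N.k
        · have hlt : (j : ℕ) < kk N φ := lt_of_lt_of_le hjk (le_max_left _ _)
          have heq : ∀ i : Fin (kk N φ), ((j : ℕ) < N.k ∧ (i : ℕ) = (j : ℕ))
              ↔ (i = ⟨(j : ℕ), hlt⟩) := by
            intro i
            constructor
            · rintro ⟨-, h⟩; exact Fin.ext h
            · rintro rfl; exact ⟨hjk, rfl⟩
          simp only [st_inp]
          rw [Finset.sum_congr rfl (fun i _ => by rw [if_congr (heq i) rfl rfl])]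
          simp only [cast_ite, Int.cast_one, Int.cast_zero, mul_ite, mul_one, mul_zero,
            Finset.sum_ite_eq', Finset.mem_univ, if_true, hjk, true_and]
        · simp [hjk]
      rw [hCsum]
      have hAsum : (∑ κ : II N φ, (∑ v ∈ Finset.univ.filter (fun v => G.edge u v = true),
            (mkN N φ a).state G 0 v ((ee N φ) κ)) * (Arule N φ 0 κ (.inl (.inl (.inr j))) : ℝ)) = 0 := by
        simp only [hA, Int.cast_zero, mul_zero, Finset.sum_const_zero]
      rw [hAsum, hb]
      have h0 : min 0 N.L = 0 := by omega
      rw [h0]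
      show clip _ = if (j : ℕ) < N.k ∧ G.label u (j : ℕ) = true then 1 else 0
      simp only [Int.cast_zero, add_zero]
      exact clip_ite _
  | succ t ih =>
      rw [st_succ]
      by_cases ht : t < N.L
      · have hCsum : (∑ κ : II N φ, (mkN N φ a).state G (t+1) u ((ee N φ) κ)
              * (Crule N φ (t+1) κ (.inl (.inl (.inr j))) : ℝ))
            = ∑ j' : Fin N.d, N.state G t u j' * (N.C t j' j : ℝ) := by
          have hCval : ∀ j' : Fin N.d, Crule N φ (t+1) (.inl (.inl (.inr j'))) (.inl (.inl (.inr j)))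
              = N.C t j' j := fun j' => by simp [Crule, ht]
          have hC0 : ∀ i : Fin (kk N φ), Crule N φ (t+1) (.inl (.inl (.inl i))) (.inl (.inl (.inr j))) = 0 :=
            fun i => by simp [Crule, ht]
          have hC1 : ∀ m : Fin (nn φ), Crule N φ (t+1) (.inl (.inr m)) (.inl (.inl (.inr j))) = 0 :=
            fun m => by simp [Crule, ht]
          have hC2 : ∀ z : Fin 1, Crule N φ (t+1) (.inr z) (.inl (.inl (.inr j))) = 0 :=
            fun z => by simp [Crule, ht]
          rw [Fintype.sum_sum_type, Fintype.sum_sum_type, Fintype.sum_sum_type]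
          simp only [hCval, hC0, hC1, hC2, Int.cast_zero, mul_zero, Finset.sum_const_zero,
            add_zero, zero_add]
          exact Finset.sum_congr rfl (fun j' _ => by
            rw [ih u, min_eq_left (le_of_lt ht)])
        have hAsum : (∑ κ : II N φ, (∑ v ∈ Finset.univ.filter (fun v => G.edge u v = true),
              (mkN N φ a).state G (t+1) v ((ee N φ) κ)) * (Arule N φ (t+1) κ (.inl (.inl (.inr j))) : ℝ))
            = ∑ j' : Fin N.d, (∑ v ∈ Finset.univ.filter (fun v => G.edge u v = true),
                N.state G t v j') * (N.A t j' j : ℝ) := by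
          have hAval : ∀ j' : Fin N.d, Arule N φ (t+1) (.inl (.inl (.inr j'))) (.inl (.inl (.inr j)))
              = N.A t j' j := fun j' => by simp [Arule, ht]
          have hA0 : ∀ i : Fin (kk N φ), Arule N φ (t+1) (.inl (.inl (.inl i))) (.inl (.inl (.inr j))) = 0 :=
            fun i => by simp [Arule, ht]
          have hA1 : ∀ m : Fin (nn φ), Arule N φ (t+1) (.inl (.inr m)) (.inl (.inl (.inr j))) = 0 :=
            fun m => by simp [Arule, ht]
          have hA2 : ∀ z : Fin 1, Arule N φ (t+1) (.inr z) (.inl (.inl (.inr j))) = 0 :=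
            fun z => by simp [Arule, ht]
          rw [Fintype.sum_sum_type, Fintype.sum_sum_type, Fintype.sum_sum_type]
          simp only [hAval, hA0, hA1, hA2, Int.cast_zero, mul_zero, Finset.sum_const_zero,
            add_zero, zero_add]
          refine Finset.sum_congr rfl (fun j' _ => ?_)
          congr 1
          refine Finset.sum_congr rfl (fun v _ => ?_)
          rw [ih v, min_eq_left (le_of_lt ht)]
        have hbval : brule N φ (t+1) (.inl (.inl (.inr j))) = N.b t j := by
          simp [brule, ht]
        rw [hCsum, hAsum, hbval]
        have : min (t + 1) N.L = t + 1 := min_eq_left (by omega)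
        rw [this]
        rfl
      · -- frozen phase: identity update
        have hCval : ∀ κ : II N φ, Crule N φ (t+1) κ (.inl (.inl (.inr j)))
            = if κ = .inl (.inl (.inr j)) then 1 else 0 := fun κ => by
          simp [Crule, ht]
        have hA : ∀ κ : II N φ, Arule N φ (t+1) κ (.inl (.inl (.inr j))) = 0 := fun κ => by
          cases κ with
          | inl κ' => cases κ' with
            | inl κ'' => cases κ'' <;> simp [Arule, ht]
            | inr _ => simp [Arule, ht]
          | inr _ => simp [Arule, ht]
        have hb : brule N φ (t+1) (.inl (.inl (.inr j))) = 0 := by simp [brule, ht]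
        simp only [hCval, hA, hb, cast_ite, Int.cast_one, Int.cast_zero, mul_ite, mul_one,
          mul_zero, Finset.sum_ite_eq', Finset.mem_univ, if_true, Finset.sum_const_zero,
          add_zero]
        rw [ih u]
        have hmin : min t N.L = N.L := min_eq_right (by omega)
        have hmin' : min (t+1) N.L = N.L := min_eq_right (by omega)
        rw [hmin, hmin']
        exact clip_of_mem (N.state_nonneg G _ u j) (N.state_le_one G _ u j)

end StateLemmas
lemma one_le_sizeF (ψ : KForm) : 1 ≤ sizeF ψ := by
  cases ψ <;> simp [sizeF]

lemma sum_ind_card {V : Type} [Fintype V] (G : LGraph V) (u : V) (χ : KForm) :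
    (∑ v ∈ Finset.univ.filter (fun v => G.edge u v = true),
        (if KForm.sat G v χ then (1:ℝ) else 0))
      = ((Finset.univ.filter
          (fun v => G.edge u v = true ∧ KForm.sat G v χ = true)).card : ℝ) := by
  rw [Finset.sum_boole, Finset.filter_filter]

section FormulaLemma

variable (N : GNN) (φ : KForm) (a : Fin N.d → ℤ) {V : Type} [Fintype V] (G : LGraph V)

lemma st_fm : ∀ k : ℕ, ∀ ψ : KForm, sizeF ψ ≤ k → ∀ m : Fin (nn φ), (SS φ).get m = ψ →
    ∀ t : ℕ, depF ψ ≤ t → ∀ u : V,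
    (mkN N φ a).state G t u ((ee N φ) (.inl (.inr m)))
      = (if KForm.sat G u ψ then 1 else 0) := by
  intro k
  induction k with
  | zero => intro ψ hsz; exact absurd (le_trans (one_le_sizeF ψ) hsz) (by omega)
  | succ k ih =>
      intro ψ hsz m hm t ht u
      have hψφ : ψ ∈ subF φ := hm ▸ SS_get_mem φ m
      have ht1 : 1 ≤ t := le_trans (one_le_depF ψ) ht
      obtain ⟨t', rfl⟩ : ∃ t', t = t' + 1 := ⟨t - 1, by omega⟩
      rw [st_succ]
      have hC : ∀ κ : II N φ, Crule N φ t' κ (.inl (.inr m)) = fC N φ ψ κ := fun κ => by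
        simp only [Crule, hm]
      have hA : ∀ κ : II N φ, Arule N φ t' κ (.inl (.inr m)) = fA N φ ψ κ := fun κ => by
        simp only [Arule, hm]
      have hb : brule N φ t' (.inl (.inr m)) = fb ψ := by
        simp only [brule, hm]
      simp only [hC, hA, hb]
      cases ψ with
      | atom p =>
          have hp : p < kk N φ :=
            lt_of_lt_of_le (atomsF_bound φ p hψφ) (le_max_right _ _)
          have hCsum : (∑ κ : II N φ, (mkN N φ a).state G t' u ((ee N φ) κ)
                * (fC N φ (.atom p) κ : ℝ))
              = (if G.label u p then 1 else 0) := by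
            rw [Fintype.sum_sum_type, Fintype.sum_sum_type, Fintype.sum_sum_type]
            have h1 : ∀ i : Fin (kk N φ), fC N φ (.atom p) (.inl (.inl (.inl i)))
                = if (i : ℕ) = p then 1 else 0 := fun i => rfl
            have h2 : ∀ j : Fin N.d, fC N φ (.atom p) (.inl (.inl (.inr j))) = 0 := fun j => rfl
            have h3 : ∀ m' : Fin (nn φ), fC N φ (.atom p) (.inl (.inr m')) = 0 := fun m' => rfl
            have h4 : ∀ z : Fin 1, fC N φ (.atom p) (.inr z) = 0 := fun z => rfl
            simp only [h1, h2, h3, h4, Int.cast_zero, mul_zero, Finset.sum_const_zero,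
              add_zero]
            have heq : ∀ i : Fin (kk N φ), ((i : ℕ) = p) ↔ (i = ⟨p, hp⟩) := fun i =>
              ⟨fun h => Fin.ext h, fun h => h ▸ rfl⟩
            rw [Finset.sum_congr rfl (fun i _ => by rw [if_congr (heq i) rfl rfl])]
            simp only [st_inp, cast_ite, Int.cast_one, Int.cast_zero, mul_ite, mul_one,
              mul_zero, Finset.sum_ite_eq', Finset.mem_univ, if_true]
          have hAsum : (∑ κ : II N φ, (∑ v ∈ Finset.univ.filter (fun v => G.edge u v = true),
                (mkN N φ a).state G t' v ((ee N φ) κ)) * (fA N φ (.atom p) κ : ℝ)) = 0 := by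
            have h0 : ∀ κ : II N φ, fA N φ (.atom p) κ = 0 := fun κ => by
              cases κ with
              | inl κ' => cases κ' with
                | inl κ'' => cases κ'' <;> rfl
                | inr _ => rfl
              | inr _ => rfl
            simp only [h0, Int.cast_zero, mul_zero, Finset.sum_const_zero]
          rw [hCsum, hAsum]
          show clip _ = if KForm.sat G u (.atom p) then 1 else 0
          have hfb : ((fb (.atom p) : ℤ) : ℝ) = 0 := by norm_num [fb]
          rw [hfb, add_zero, add_zero, clip_ite]
          simp [KForm.sat]
          exact if_congr Iff.rfl rfl rfl
      | not ψ₁ =>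
          have hψ₁φ : ψ₁ ∈ subF φ :=
            subF_closed φ (.not ψ₁) hψφ ψ₁ (by
              show ψ₁ ∈ subF (.not ψ₁)
              simp only [subF, List.mem_cons]
              exact Or.inr (self_mem_subF ψ₁))
          have hψ₁S : ψ₁ ∈ SS φ := (mem_SS φ).mpr hψ₁φ
          have hCsum : (∑ κ : II N φ, (mkN N φ a).state G t' u ((ee N φ) κ)
                * (fC N φ (.not ψ₁) κ : ℝ))
              = (-1) * (if KForm.sat G u ψ₁ then 1 else 0) := by
            rw [Fintype.sum_sum_type, Fintype.sum_sum_type, Fintype.sum_sum_type]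
            have h1 : ∀ i : Fin (kk N φ), fC N φ (.not ψ₁) (.inl (.inl (.inl i))) = 0 :=
              fun i => rfl
            have h2 : ∀ j : Fin N.d, fC N φ (.not ψ₁) (.inl (.inl (.inr j))) = 0 := fun j => rfl
            have h4 : ∀ z : Fin 1, fC N φ (.not ψ₁) (.inr z) = 0 := fun z => rfl
            have h3 : ∀ m' : Fin (nn φ), fC N φ (.not ψ₁) (.inl (.inr m'))
                = if (SS φ).get m' = ψ₁ then -1 else 0 := fun m' => rfl
            simp only [h1, h2, h3, h4, Int.cast_zero, mul_zero, Finset.sum_const_zero,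
              add_zero, zero_add]
            have hstep : (∑ m' : Fin (nn φ), (mkN N φ a).state G t' u ((ee N φ) (.inl (.inr m')))
                  * ((if (SS φ).get m' = ψ₁ then (-1:ℤ) else 0 : ℤ) : ℝ))
                = ∑ m' : Fin (nn φ), (if (SS φ).get m' = ψ₁ then (-1:ℝ) else 0)
                  * (mkN N φ a).state G t' u ((ee N φ) (.inl (.inr m'))) :=
              Finset.sum_congr rfl (fun m' _ => by rw [cast_ite]; push_cast; ring)
            rw [hstep]
            have e₁ : (∑ m' : Fin (nn φ), (if (SS φ).get m' = ψ₁ then (-1:ℝ) else 0)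
                  * (mkN N φ a).state G t' u ((ee N φ) (.inl (.inr m'))))
                = (-1) * (if KForm.sat G u ψ₁ then (1:ℝ) else 0) :=
              sum_delta φ ψ₁ hψ₁S _ (-1) _ (fun m' hm' =>
                ih ψ₁ (by simp [sizeF] at hsz; omega) m' hm' t'
                  (by simp [depF] at ht; omega) u)
            exact e₁
          have hAsum : (∑ κ : II N φ, (∑ v ∈ Finset.univ.filter (fun v => G.edge u v = true),
                (mkN N φ a).state G t' v ((ee N φ) κ)) * (fA N φ (.not ψ₁) κ : ℝ)) = 0 := by
            have h0 : ∀ κ : II N φ, fA N φ (.not ψ₁) κ = 0 := fun κ => by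
              cases κ with
              | inl κ' => cases κ' with
                | inl κ'' => cases κ'' <;> rfl
                | inr _ => rfl
              | inr _ => rfl
            simp only [h0, Int.cast_zero, mul_zero, Finset.sum_const_zero]
          rw [hCsum, hAsum]
          show clip _ = if KForm.sat G u (.not ψ₁) then 1 else 0
          have hfb : ((fb (.not ψ₁) : ℤ) : ℝ) = 1 := by norm_num [fb]
          rw [hfb]
          cases hs : KForm.sat G u ψ₁ <;>
            norm_num [KForm.sat, hs, clip_zero, clip_one]
      | or ψ₁ ψ₂ =>
          have hsubmem : ∀ χ, χ ∈ subF (KForm.or ψ₁ ψ₂) → χ ∈ SS φ := fun χ hχ =>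
            (mem_SS φ).mpr (subF_closed φ _ hψφ χ hχ)
          have hψ₁S : ψ₁ ∈ SS φ := hsubmem ψ₁ (by
            simp only [subF, List.mem_cons, List.mem_append]
            exact Or.inr (Or.inl (self_mem_subF ψ₁)))
          have hψ₂S : ψ₂ ∈ SS φ := hsubmem ψ₂ (by
            simp only [subF, List.mem_cons, List.mem_append]
            exact Or.inr (Or.inr (self_mem_subF ψ₂)))
          have hCsum : (∑ κ : II N φ, (mkN N φ a).state G t' u ((ee N φ) κ)
                * (fC N φ (.or ψ₁ ψ₂) κ : ℝ))
              = (if KForm.sat G u ψ₁ then 1 else 0) + (if KForm.sat G u ψ₂ then 1 else 0) := by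
            rw [Fintype.sum_sum_type, Fintype.sum_sum_type, Fintype.sum_sum_type]
            have h1 : ∀ i : Fin (kk N φ), fC N φ (.or ψ₁ ψ₂) (.inl (.inl (.inl i))) = 0 :=
              fun i => rfl
            have h2 : ∀ j : Fin N.d, fC N φ (.or ψ₁ ψ₂) (.inl (.inl (.inr j))) = 0 := fun j => rfl
            have h4 : ∀ z : Fin 1, fC N φ (.or ψ₁ ψ₂) (.inr z) = 0 := fun z => rfl
            have h3 : ∀ m' : Fin (nn φ), fC N φ (.or ψ₁ ψ₂) (.inl (.inr m'))
                = (if (SS φ).get m' = ψ₁ then 1 else 0)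
                  + (if (SS φ).get m' = ψ₂ then 1 else 0) := fun m' => rfl
            simp only [h1, h2, h3, h4, Int.cast_zero, mul_zero, Finset.sum_const_zero,
              add_zero, zero_add]
            have hstep : (∑ m' : Fin (nn φ), (mkN N φ a).state G t' u ((ee N φ) (.inl (.inr m')))
                  * ((((if (SS φ).get m' = ψ₁ then (1:ℤ) else 0)
                      + (if (SS φ).get m' = ψ₂ then (1:ℤ) else 0)) : ℤ) : ℝ))
                = ∑ m' : Fin (nn φ), ((if (SS φ).get m' = ψ₁ then (1:ℝ) else 0)
                    * (mkN N φ a).state G t' u ((ee N φ) (.inl (.inr m')))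
                  + (if (SS φ).get m' = ψ₂ then (1:ℝ) else 0)
                    * (mkN N φ a).state G t' u ((ee N φ) (.inl (.inr m')))) :=
              Finset.sum_congr rfl (fun m' _ => by
                rw [Int.cast_add, cast_ite, cast_ite]; push_cast; ring)
            rw [hstep, Finset.sum_add_distrib]
            have e₁ : (∑ m' : Fin (nn φ), (if (SS φ).get m' = ψ₁ then (1:ℝ) else 0)
                  * (mkN N φ a).state G t' u ((ee N φ) (.inl (.inr m'))))
                = 1 * (if KForm.sat G u ψ₁ then (1:ℝ) else 0) :=
              sum_delta φ ψ₁ hψ₁S _ 1 _ (fun m' hm' =>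
                ih ψ₁ (by simp [sizeF] at hsz; omega) m' hm' t'
                  (by simp [depF] at ht; omega) u)
            have e₂ : (∑ m' : Fin (nn φ), (if (SS φ).get m' = ψ₂ then (1:ℝ) else 0)
                  * (mkN N φ a).state G t' u ((ee N φ) (.inl (.inr m'))))
                = 1 * (if KForm.sat G u ψ₂ then (1:ℝ) else 0) :=
              sum_delta φ ψ₂ hψ₂S _ 1 _ (fun m' hm' =>
                ih ψ₂ (by simp [sizeF] at hsz; omega) m' hm' t'
                  (by simp [depF] at ht; omega) u)
            rw [e₁, e₂, one_mul, one_mul]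
          have hAsum : (∑ κ : II N φ, (∑ v ∈ Finset.univ.filter (fun v => G.edge u v = true),
                (mkN N φ a).state G t' v ((ee N φ) κ)) * (fA N φ (.or ψ₁ ψ₂) κ : ℝ)) = 0 := by
            have h0 : ∀ κ : II N φ, fA N φ (.or ψ₁ ψ₂) κ = 0 := fun κ => by
              cases κ with
              | inl κ' => cases κ' with
                | inl κ'' => cases κ'' <;> rfl
                | inr _ => rfl
              | inr _ => rfl
            simp only [h0, Int.cast_zero, mul_zero, Finset.sum_const_zero]
          rw [hCsum, hAsum]
          show clip _ = if KForm.sat G u (.or ψ₁ ψ₂) then 1 else 0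
          have hfb : ((fb (.or ψ₁ ψ₂) : ℤ) : ℝ) = 0 := by norm_num [fb]
          rw [hfb]
          have clip_two : clip 2 = 1 := clip_eq_one (by norm_num)
          cases h₁ : KForm.sat G u ψ₁ <;> cases h₂ : KForm.sat G u ψ₂ <;>
            norm_num [KForm.sat, h₁, h₂, clip_zero, clip_one, clip_two]
      | ge0 E =>
          have hE : ∀ χ ∈ subE E, χ ∈ SS φ := fun χ hχ =>
            (mem_SS φ).mpr (subF_closed φ (.ge0 E) hψφ χ (by
              show χ ∈ subF (.ge0 E)
              simp only [subF, List.mem_cons]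
              exact Or.inr hχ))
          have hsz' : sizeE E ≤ k := by simp [sizeF] at hsz; omega
          have ht' : depE E ≤ t' := by simp [depF] at ht; omega
          have hCsum : (∑ κ : II N φ, (mkN N φ a).state G t' u ((ee N φ) κ)
                * (fC N φ (.ge0 E) κ : ℝ))
              = ((∑ m' : Fin (nn φ), indCoef E ((SS φ).get m')
                  * (if KForm.sat G u ((SS φ).get m') then 1 else 0) : ℤ) : ℝ) := by
            rw [Fintype.sum_sum_type, Fintype.sum_sum_type, Fintype.sum_sum_type]
            have h1 : ∀ i : Fin (kk N φ), fC N φ (.ge0 E) (.inl (.inl (.inl i))) = 0 :=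
              fun i => rfl
            have h2 : ∀ j : Fin N.d, fC N φ (.ge0 E) (.inl (.inl (.inr j))) = 0 := fun j => rfl
            have h4 : ∀ z : Fin 1, fC N φ (.ge0 E) (.inr z) = 0 := fun z => rfl
            have h3 : ∀ m' : Fin (nn φ), fC N φ (.ge0 E) (.inl (.inr m'))
                = indCoef E ((SS φ).get m') := fun m' => rfl
            simp only [h1, h2, h3, h4, Int.cast_zero, mul_zero, Finset.sum_const_zero,
              add_zero, zero_add]
            push_cast
            refine Finset.sum_congr rfl (fun m' _ => ?_)
            by_cases hc : indCoef E ((SS φ).get m') = 0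
            · rw [hc]; norm_num
            · have hmem : (SS φ).get m' ∈ subE E := indCoef_support E _ hc
              have := ih ((SS φ).get m') (le_trans (sizeE_mono E _ hmem) hsz') m' rfl t'
                (le_trans (depE_mono E _ hmem) ht') u
              rw [this]
              ring
          have hAsum : (∑ κ : II N φ, (∑ v ∈ Finset.univ.filter (fun v => G.edge u v = true),
                (mkN N φ a).state G t' v ((ee N φ) κ)) * (fA N φ (.ge0 E) κ : ℝ))
              = ((∑ m' : Fin (nn φ), cntCoef E ((SS φ).get m')
                  * ((Finset.univ.filter (fun v => G.edge u v = true
                        ∧ KForm.sat G v ((SS φ).get m') = true)).card : ℤ) : ℤ) : ℝ) := by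
            rw [Fintype.sum_sum_type, Fintype.sum_sum_type, Fintype.sum_sum_type]
            have h1 : ∀ i : Fin (kk N φ), fA N φ (.ge0 E) (.inl (.inl (.inl i))) = 0 :=
              fun i => rfl
            have h2 : ∀ j : Fin N.d, fA N φ (.ge0 E) (.inl (.inl (.inr j))) = 0 := fun j => rfl
            have h4 : ∀ z : Fin 1, fA N φ (.ge0 E) (.inr z) = 0 := fun z => rfl
            have h3 : ∀ m' : Fin (nn φ), fA N φ (.ge0 E) (.inl (.inr m'))
                = cntCoef E ((SS φ).get m') := fun m' => rfl
            simp only [h1, h2, h3, h4, Int.cast_zero, mul_zero, Finset.sum_const_zero,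
              add_zero, zero_add]
            push_cast
            refine Finset.sum_congr rfl (fun m' _ => ?_)
            by_cases hc : cntCoef E ((SS φ).get m') = 0
            · rw [hc]; norm_num
            · have hmem : (SS φ).get m' ∈ subE E := cntCoef_support E _ hc
              have hind : ∀ v : V, (mkN N φ a).state G t' v ((ee N φ) (.inl (.inr m')))
                  = (if KForm.sat G v ((SS φ).get m') then 1 else 0) := fun v =>
                ih ((SS φ).get m') (le_trans (sizeE_mono E _ hmem) hsz') m' rfl t'
                  (le_trans (depE_mono E _ hmem) ht') v
              rw [Finset.sum_congr rfl (fun v _ => hind v), sum_ind_card, mul_comm]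
          rw [hCsum, hAsum]
          show clip _ = if KForm.sat G u (.ge0 E) then 1 else 0
          have hfb : fb (.ge0 E) = constTerm E + 1 := rfl
          rw [hfb]
          have hval := val_linear φ G u E hE
          have hpre : ((∑ m' : Fin (nn φ), indCoef E ((SS φ).get m')
                  * (if KForm.sat G u ((SS φ).get m') then 1 else 0) : ℤ) : ℝ)
              + ((∑ m' : Fin (nn φ), cntCoef E ((SS φ).get m')
                  * ((Finset.univ.filter (fun v => G.edge u v = true
                        ∧ KForm.sat G v ((SS φ).get m') = true)).card : ℤ) : ℤ) : ℝ)
              + ((constTerm E + 1 : ℤ) : ℝ)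
              = ((KExpr.val G u E : ℤ) : ℝ) + 1 := by
            rw [hval]; push_cast; ring
          rw [hpre]
          simp only [KForm.sat]
          by_cases h0 : (0 : ℤ) ≤ KExpr.val G u E
          · have : (1 : ℝ) ≤ (KExpr.val G u E : ℝ) + 1 := by
              have : (0 : ℝ) ≤ (KExpr.val G u E : ℝ) := by exact_mod_cast h0
              linarith
            rw [clip_eq_one this]
            simp [h0]
          · have hle : KExpr.val G u E ≤ -1 := by omega
            have : (KExpr.val G u E : ℝ) + 1 ≤ 0 := by
              have : (KExpr.val G u E : ℝ) ≤ -1 := by exact_mod_cast hle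
              linarith
            rw [clip_eq_zero this]
            simp [h0]

end FormulaLemma
/-! ### The main theorem -/

/-- Tuning of a GNN: given a GNN `N` (sum aggregation, integer weights, linear
integer classification) and a `K^#` formula `φ`, there is a GNN `N'` of the same
kind accepting exactly the pointed graphs accepted by `N` that satisfy `φ`. -/
theorem gnn_tuning (N : GNN) (a : Fin N.d → ℤ)
    (hcls : ∀ x : Fin N.d → ℝ, N.cls x = decide (0 ≤ ∑ i, (a i : ℝ) * x i))
    (φ : KForm) :
    ∃ N' : GNN,
      (∃ a' : Fin N'.d → ℤ,
        ∀ x : Fin N'.d → ℝ, N'.cls x = decide (0 ≤ ∑ i, (a' i : ℝ) * x i)) ∧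
      ∀ (V : Type) [Fintype V] (G : LGraph V) (u : V),
        N'.accepts G u ↔ (N.accepts G u ∧ KForm.sat G u φ = true) := by
  refine ⟨mkN N φ a, ⟨fun i => aa N φ a ((ee N φ).symm i), fun x => rfl⟩, ?_⟩
  intro V _ G u
  have hφS : φ ∈ SS φ := (mem_SS φ).mpr (self_mem_subF φ)
  set T := max N.L (depF φ) with hT
  have hL : (mkN N φ a).L = T + 1 := rfl
  -- the final value of the simulation coordinates
  have hb1 : ∀ j : Fin N.d, (mkN N φ a).state G (T+1) u ((ee N φ) (.inl (.inl (.inr j))))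
      = N.state G N.L u j := by
    intro j
    rw [st_b1, min_eq_right (le_max_left _ _)]
  -- the final value of the formula coordinate(s)
  have hfm : ∀ m : Fin (nn φ), (SS φ).get m = φ →
      (mkN N φ a).state G (T+1) u ((ee N φ) (.inl (.inr m)))
        = (if KForm.sat G u φ then 1 else 0) := fun m hm =>
    st_fm N φ a G (sizeF φ) φ le_rfl m hm (T+1)
      (le_trans (le_max_right N.L (depF φ)) (by omega)) u
  have hcst : ∀ z : Fin 1, (mkN N φ a).state G (T+1) u ((ee N φ) (.inr z)) = 1 :=
    fun z => st_cst N φ a G T u z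
  -- compute the output linear form
  have hsum : (∑ i : Fin (mkN N φ a).d, ((aa N φ a ((ee N φ).symm i) : ℤ) : ℝ)
        * (mkN N φ a).state G (T+1) u i)
      = (∑ j : Fin N.d, (a j : ℝ) * N.state G N.L u j)
        + ((Mbig N a : ℤ) : ℝ) * (if KForm.sat G u φ then 1 else 0)
        - ((Mbig N a : ℤ) : ℝ) := by
    rw [show (∑ i : Fin (mkN N φ a).d, ((aa N φ a ((ee N φ).symm i) : ℤ) : ℝ)
          * (mkN N φ a).state G (T+1) u i)
        = ∑ ι : II N φ, ((aa N φ a ι : ℤ) : ℝ) * (mkN N φ a).state G (T+1) u ((ee N φ) ι)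
      from (Fintype.sum_equiv (ee N φ) _ _ (fun ι => by
        rw [Equiv.symm_apply_apply])).symm]
    rw [Fintype.sum_sum_type, Fintype.sum_sum_type, Fintype.sum_sum_type]
    have e0 : (∑ i : Fin (kk N φ), ((aa N φ a (.inl (.inl (.inl i))) : ℤ) : ℝ)
        * (mkN N φ a).state G (T+1) u ((ee N φ) (.inl (.inl (.inl i))))) = 0 := by
      have : ∀ i : Fin (kk N φ), aa N φ a (.inl (.inl (.inl i))) = 0 := fun i => rfl
      simp only [this, Int.cast_zero, zero_mul, Finset.sum_const_zero]
    have e1 : (∑ j : Fin N.d, ((aa N φ a (.inl (.inl (.inr j))) : ℤ) : ℝ)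
        * (mkN N φ a).state G (T+1) u ((ee N φ) (.inl (.inl (.inr j)))))
        = ∑ j : Fin N.d, (a j : ℝ) * N.state G N.L u j := by
      refine Finset.sum_congr rfl (fun j _ => ?_)
      rw [hb1 j]
      rfl
    have e2 : (∑ m : Fin (nn φ), ((aa N φ a (.inl (.inr m)) : ℤ) : ℝ)
        * (mkN N φ a).state G (T+1) u ((ee N φ) (.inl (.inr m))))
        = ((Mbig N a : ℤ) : ℝ) * (if KForm.sat G u φ then 1 else 0) := by
      have haa : ∀ m : Fin (nn φ), aa N φ a (.inl (.inr m))
          = if (SS φ).get m = φ then Mbig N a else 0 := fun m => rfl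
      have hstep : (∑ m : Fin (nn φ), ((aa N φ a (.inl (.inr m)) : ℤ) : ℝ)
            * (mkN N φ a).state G (T+1) u ((ee N φ) (.inl (.inr m))))
          = ∑ m : Fin (nn φ), (if (SS φ).get m = φ then ((Mbig N a : ℤ) : ℝ) else 0)
            * (mkN N φ a).state G (T+1) u ((ee N φ) (.inl (.inr m))) :=
        Finset.sum_congr rfl (fun m _ => by rw [haa m, cast_ite]; norm_num)
      rw [hstep]
      exact sum_delta φ φ hφS _ _ _ (fun m hm => hfm m hm)
    have e3 : (∑ z : Fin 1, ((aa N φ a (.inr z) : ℤ) : ℝ)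
        * (mkN N φ a).state G (T+1) u ((ee N φ) (.inr z)))
        = -((Mbig N a : ℤ) : ℝ) := by
      have haa : ∀ z : Fin 1, aa N φ a (.inr z) = -(Mbig N a) := fun z => rfl
      simp only [haa, hcst, Int.cast_neg, mul_one, Finset.sum_const, Finset.card_univ,
        Fintype.card_fin, one_smul]
    rw [e0, e1, e2, e3]
    ring
  -- bound on the original linear form
  have hbound : (∑ j : Fin N.d, (a j : ℝ) * N.state G N.L u j)
      ≤ ((Mbig N a : ℤ) : ℝ) - 1 := by
    have h1 : (∑ j : Fin N.d, (a j : ℝ) * N.state G N.L u j)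
        ≤ ∑ j : Fin N.d, (|a j| : ℝ) := by
      refine Finset.sum_le_sum (fun j _ => ?_)
      have hx0 := N.state_nonneg G N.L u j
      have hx1 := N.state_le_one G N.L u j
      have ha1 : ((a j : ℝ)) ≤ (|a j| : ℝ) := by exact_mod_cast le_abs_self (a j)
      have ha0 : (0 : ℝ) ≤ (|a j| : ℝ) := by exact_mod_cast abs_nonneg (a j)
      nlinarith
    have h2 : (∑ j : Fin N.d, (|a j| : ℝ)) = ((Mbig N a : ℤ) : ℝ) - 1 := by
      rw [Mbig]
      push_cast
      ring
    linarith
  -- put it together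
  show (mkN N φ a).cls ((mkN N φ a).state G ((mkN N φ a).L) u) = true ↔ _
  rw [hL]
  have hclseq : (mkN N φ a).cls ((mkN N φ a).state G (T+1) u)
      = decide (0 ≤ (∑ i : Fin (mkN N φ a).d, ((aa N φ a ((ee N φ).symm i) : ℤ) : ℝ)
          * (mkN N φ a).state G (T+1) u i)) := rfl
  rw [hclseq, hsum]
  have hacc : N.accepts G u ↔ (0 ≤ ∑ j : Fin N.d, (a j : ℝ) * N.state G N.L u j) := by
    rw [GNN.accepts, hcls]
    simp
  by_cases hsat : KForm.sat G u φ = true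
  · have hone : (if KForm.sat G u φ = true then (1:ℝ) else 0) = 1 := by simp [hsat]
    rw [hone, mul_one]
    rw [show (∑ j : Fin N.d, (a j : ℝ) * N.state G N.L u j)
        + ((Mbig N a : ℤ) : ℝ) - ((Mbig N a : ℤ) : ℝ)
        = ∑ j : Fin N.d, (a j : ℝ) * N.state G N.L u j from by ring]
    constructor
    · intro h; exact ⟨hacc.mpr (of_decide_eq_true h), hsat⟩
    · intro h; exact decide_eq_true (hacc.mp h.1)
  · have hsat' : KForm.sat G u φ = false := by simpa using hsat
    have hzero : (if KForm.sat G u φ = true then (1:ℝ) else 0) = 0 := by simp [hsat']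
    rw [hzero, mul_zero, add_zero]
    constructor
    · intro h
      exfalso
      have := of_decide_eq_true h
      linarith
    · rintro ⟨-, h⟩
      rw [hsat'] at h
      cases h
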